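/- For n ≥ 13 and any odd prime p, the quadratic Green-Sanders example QGS(p,n) has VC_2-dimension at least 2. -/
import Mathlib

open Matrix

/-- The quadratic Green–Sanders example in `F_p^n`, defined from a family of
symmetric matrices `M`. -/
def QGS (p n : ℕ) [NeZero p] (M : Fin n → Matrix (Fin n) (Fin n) (ZMod p)) :
    Set (Fin n → ZMod p) :=
  {x | ∃ i : Fin n, (∀ j < i, x ⬝ᵥ (M j).mulVec x = 0) ∧ x ⬝ᵥ (M i).mulVec x = 1}

/-- `A` has VC₂-dimension at least `k`. -/
def VC2ge {G : Type*} [AddCommGroup G] (A : Set G) (k : ℕ) : Prop :=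
  ∃ x y : Fin k → G, ∃ z : Finset (Fin k × Fin k) → G,
    ∀ (S : Finset (Fin k × Fin k)) (i j : Fin k),
      x i + y j + z S ∈ A ↔ (i, j) ∈ S

section Aux

open MvPolynomial

variable {p n : ℕ} [Fact p.Prime]

/-- quadratic polynomial associated to a matrix -/
noncomputable def quadPoly (A : Matrix (Fin n) (Fin n) (ZMod p)) : MvPolynomial (Fin n) (ZMod p) :=
  ∑ i, ∑ j, MvPolynomial.C (A i j) * (X i * X j)

noncomputable def linPoly (l : Fin n → ZMod p) : MvPolynomial (Fin n) (ZMod p) :=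
  ∑ i, MvPolynomial.C (l i) * X i

lemma eval_quadPoly (A : Matrix (Fin n) (Fin n) (ZMod p)) (x : Fin n → ZMod p) :
    eval x (quadPoly A) = x ⬝ᵥ A.mulVec x := by
  simp [quadPoly, dotProduct, Matrix.mulVec, Finset.mul_sum]
  refine Finset.sum_congr rfl fun i _ => Finset.sum_congr rfl fun j _ => by ring

lemma eval_linPoly (l : Fin n → ZMod p) (x : Fin n → ZMod p) :
    eval x (linPoly l) = l ⬝ᵥ x := by
  simp [linPoly, dotProduct]

lemma totalDegree_quadPoly (A : Matrix (Fin n) (Fin n) (ZMod p)) :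
    (quadPoly A).totalDegree ≤ 2 := by
  refine (totalDegree_finset_sum _ _).trans (Finset.sup_le fun i _ => ?_)
  refine (totalDegree_finset_sum _ _).trans (Finset.sup_le fun j _ => ?_)
  calc (MvPolynomial.C (A i j) * (X i * X j)).totalDegree
      ≤ (MvPolynomial.C (A i j)).totalDegree + (X i * X j : MvPolynomial (Fin n) (ZMod p)).totalDegree := totalDegree_mul _ _
    _ ≤ 0 + ((X i : MvPolynomial (Fin n) (ZMod p)).totalDegree + (X j : MvPolynomial (Fin n) (ZMod p)).totalDegree) := by
        gcongr
        · exact le_of_eq (totalDegree_C _)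
        · exact totalDegree_mul _ _
    _ ≤ 2 := by simp [totalDegree_X]

lemma totalDegree_linPoly (l : Fin n → ZMod p) :
    (linPoly l).totalDegree ≤ 1 := by
  refine (totalDegree_finset_sum _ _).trans (Finset.sup_le fun i _ => ?_)
  calc (MvPolynomial.C (l i) * X i).totalDegree
      ≤ (MvPolynomial.C (l i)).totalDegree + (X i : MvPolynomial (Fin n) (ZMod p)).totalDegree := totalDegree_mul _ _
    _ ≤ 1 := by simp [totalDegree_X, totalDegree_C]

lemma cw_aux (hn : 13 ≤ n) (A0 A1 : Matrix (Fin n) (Fin n) (ZMod p))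
    (L : Fin 8 → (Fin n → ZMod p)) :
    ∃ x : Fin n → ZMod p, x ≠ 0 ∧ x ⬝ᵥ A0.mulVec x = 0 ∧ x ⬝ᵥ A1.mulVec x = 0 ∧
      ∀ i, L i ⬝ᵥ x = 0 := by
  classical
  set f : Fin 10 → MvPolynomial (Fin n) (ZMod p) := fun k =>
    if h : (k : ℕ) = 0 then quadPoly A0
    else if h1 : (k : ℕ) = 1 then quadPoly A1
    else linPoly (L ⟨(k : ℕ) - 2, by omega⟩) with hf
  have hdeg : (∑ k, (f k).totalDegree) < Fintype.card (Fin n) := by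
    have hb : ∀ k : Fin 10, (f k).totalDegree ≤ if (k:ℕ) < 2 then 2 else 1 := fun k => by
      by_cases h : (k:ℕ) = 0
      · simp only [hf, dif_pos h, h]
        simpa using totalDegree_quadPoly A0
      · by_cases h1 : (k:ℕ) = 1
        · simp only [hf, dif_neg h, dif_pos h1, h1]
          simpa using totalDegree_quadPoly A1
        · simp only [hf, dif_neg h, dif_neg h1]
          have : ¬ ((k:ℕ) < 2) := by omega
          simpa [this] using totalDegree_linPoly (L ⟨(k : ℕ) - 2, by omega⟩)
    calc (∑ k, (f k).totalDegree) ≤ ∑ k : Fin 10, (if (k:ℕ) < 2 then 2 else 1) :=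
          Finset.sum_le_sum fun k _ => hb k
      _ = 12 := by decide
      _ < Fintype.card (Fin n) := by simp; omega
  have hdvd := char_dvd_card_solutions_of_fintype_sum_lt p hdeg
  -- 0 is a solution
  have h0 : ∀ k, eval (0 : Fin n → ZMod p) (f k) = 0 := by
    intro k
    by_cases h : (k:ℕ) = 0
    · simp only [hf]; rw [dif_pos h, eval_quadPoly]; simp
    · by_cases h1 : (k:ℕ) = 1
      · simp only [hf]; rw [dif_neg h, dif_pos h1, eval_quadPoly]; simp
      · simp only [hf]; rw [dif_neg h, dif_neg h1, eval_linPoly]; simp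
  by_contra hcon
  push_neg at hcon
  have hall : ∀ x : Fin n → ZMod p, (∀ k, eval x (f k) = 0) → x = 0 := by
    intro x hx
    by_contra hx0
    have hq0 : x ⬝ᵥ A0.mulVec x = 0 := by
      have := hx 0; simp only [hf] at this
      rw [dif_pos (by norm_num), eval_quadPoly] at this; exact this
    have hq1 : x ⬝ᵥ A1.mulVec x = 0 := by
      have := hx 1; simp only [hf] at this
      rw [dif_neg (by norm_num), dif_pos (by norm_num), eval_quadPoly] at this; exact this
    have hl : ∀ i : Fin 8, L i ⬝ᵥ x = 0 := by
      intro i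
      have := hx ⟨(i:ℕ) + 2, by omega⟩
      simp only [hf] at this
      rw [dif_neg (by simp), dif_neg (by simp), eval_linPoly] at this
      simpa using this
    obtain ⟨i, hi⟩ := hcon x hx0 hq0 hq1
    exact hi (hl i)
  have hcard : Fintype.card { x : Fin n → ZMod p // ∀ i : Fin 10, eval x (f i) = 0 } = 1 := by
    refine le_antisymm ?_ ?_
    · refine Fintype.card_le_one_iff.2 fun a b => ?_
      exact Subtype.ext ((hall a.1 a.2).trans (hall b.1 b.2).symm)
    · exact Fintype.card_pos_iff.2 ⟨⟨0, h0⟩⟩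
  have hd1 : p ∣ 1 := by
    convert hdvd using 2
    rw [← hcard]
    congr 1
    exact Subsingleton.elim _ _
  exact (Fact.out : p.Prime).one_lt.ne' (Nat.dvd_one.mp hd1)

lemma dual_family {k : ℕ} (w : Fin k → (Fin n → ZMod p))
    (hw : LinearIndependent (ZMod p) w) :
    ∃ ξ : Fin k → (Fin n → ZMod p),
      ∀ i j, ξ i ⬝ᵥ w j = if i = j then 1 else 0 := by
  classical
  let f : (Fin k → ZMod p) →ₗ[ZMod p] (Fin n → ZMod p) :=
    { toFun := fun c => ∑ i, c i • w i
      map_add' := by intro c d; simp [add_smul, Finset.sum_add_distrib]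
      map_smul' := by intro r c; simp [Finset.smul_sum, smul_smul] }
  have hker : LinearMap.ker f = ⊥ := by
    rw [LinearMap.ker_eq_bot']
    intro c hc
    funext i
    exact Fintype.linearIndependent_iff.mp hw c hc i
  obtain ⟨g, hg⟩ := f.exists_leftInverse_of_injective hker
  have hfw : ∀ j, f (Pi.single j (1 : ZMod p)) = w j := by
    intro j
    have hfd : f (Pi.single j (1 : ZMod p)) = ∑ i, (Pi.single j (1 : ZMod p) : Fin k → ZMod p) i • w i := rfl
    rw [hfd, Finset.sum_eq_single j]
    · simp
    · intro i _ hij; rw [Pi.single_eq_of_ne hij]; simp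
    · intro h; exact absurd (Finset.mem_univ j) h
  refine ⟨fun i jj => g (Pi.single jj 1) i, fun i j => ?_⟩
  have hgx : ∀ x : Fin n → ZMod p, (fun jj => g (Pi.single jj 1) i) ⬝ᵥ x = g x i := by
    intro x
    conv_rhs => rw [← Finset.univ_sum_single x]
    rw [map_sum]
    simp only [Finset.sum_apply, dotProduct]
    refine Finset.sum_congr rfl fun jj _ => ?_
    have : (Pi.single jj (x jj) : Fin n → ZMod p) = x jj • (Pi.single jj (1 : ZMod p) : Fin n → ZMod p) := by
      funext t
      by_cases ht : t = jj
      · subst ht; simp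
      · simp [Pi.single_eq_of_ne ht]
    rw [this, _root_.map_smul]
    simp [mul_comm]
  rw [hgx, ← hfw j, ← LinearMap.comp_apply, hg]
  simp [Pi.single_apply]

lemma mulVec_surj (A : Matrix (Fin n) (Fin n) (ZMod p)) (h : A.rank = n) :
    ∀ y : Fin n → ZMod p, ∃ x, A.mulVec x = y := by
  have h' : Module.finrank (ZMod p) (LinearMap.range A.mulVecLin) = n := h
  have htop : LinearMap.range A.mulVecLin = ⊤ := by
    apply Submodule.eq_top_of_finrank_eq
    rw [h', Module.finrank_pi, Fintype.card_fin]
  intro y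
  obtain ⟨x, hx⟩ := LinearMap.range_eq_top.mp htop y
  exact ⟨x, hx⟩

lemma mulVec_inj (A : Matrix (Fin n) (Fin n) (ZMod p)) (h : A.rank = n)
    {x : Fin n → ZMod p} (hx : A.mulVec x = 0) : x = 0 := by
  have hsurj : Function.Surjective A.mulVecLin := by
    intro y; obtain ⟨x, hx⟩ := mulVec_surj A h y; exact ⟨x, hx⟩
  have hinj : Function.Injective A.mulVecLin :=
    (LinearMap.injective_iff_surjective).mpr hsurj
  have : A.mulVecLin x = A.mulVecLin 0 := by simpa using hx
  exact hinj this

/-- The target matrix of `Q₀`-values for the four cells, as integers.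
Cells: (i,j) with i,j : Fin 2; argument booleans say whether each cell is in S. -/
def tblm : Bool → Bool → Bool → Bool → Fin 2 → Fin 2 → ℤ
  | true,  true,  true,  true  => fun i j => ![![1,1],![1,1]] i j
  | false, true,  true,  true  => fun i j => ![![2,1],![1,0]] i j
  | true,  false, true,  true  => fun i j => ![![1,2],![0,1]] i j
  | true,  true,  false, true  => fun i j => ![![1,0],![2,1]] i j
  | true,  true,  true,  false => fun i j => ![![0,1],![1,2]] i j
  | true,  true,  false, false => fun i j => ![![1,1],![2,2]] i j
  | false, false, true,  true  => fun i j => ![![2,2],![1,1]] i j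
  | true,  false, true,  false => fun i j => ![![1,2],![1,2]] i j
  | false, true,  false, true  => fun i j => ![![2,1],![2,1]] i j
  | true,  false, false, true  => fun i j => ![![1,0],![2,1]] i j
  | false, true,  true,  false => fun i j => ![![0,1],![1,2]] i j
  | true,  false, false, false => fun i j => ![![1,2],![-1,0]] i j
  | false, true,  false, false => fun i j => ![![2,1],![0,-1]] i j
  | false, false, true,  false => fun i j => ![![2,0],![1,-1]] i j
  | false, false, false, true  => fun i j => ![![0,2],![-1,1]] i j
  | false, false, false, false => fun i j => ![![2,2],![2,2]] i j

/-- The deferred cell (if any) together with a boolean: `true` means the second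
quadratic should take value 1 there, `false` means value 2. -/
def tbld : Bool → Bool → Bool → Bool → Option ((Fin 2 × Fin 2) × Bool)
  | true,  true,  true,  true  => none
  | false, true,  true,  true  => some ((1,1), true)
  | true,  false, true,  true  => some ((1,0), true)
  | true,  true,  false, true  => some ((0,1), true)
  | true,  true,  true,  false => some ((0,0), true)
  | true,  true,  false, false => none
  | false, false, true,  true  => none
  | true,  false, true,  false => none
  | false, true,  false, true  => none
  | true,  false, false, true  => some ((0,1), false)
  | false, true,  true,  false => some ((0,0), false)
  | true,  false, false, false => some ((1,1), false)
  | false, true,  false, false => some ((1,0), false)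
  | false, false, true,  false => some ((0,1), false)
  | false, false, false, true  => some ((0,0), false)
  | false, false, false, false => none

/-- selector for the boolean of a cell -/
def bsel (b00 b01 b10 b11 : Bool) (i j : Fin 2) : Bool :=
  if i = 0 then (if j = 0 then b00 else b01) else (if j = 0 then b10 else b11)

lemma tbl_D : ∀ b00 b01 b10 b11,
    tblm b00 b01 b10 b11 0 0 + tblm b00 b01 b10 b11 1 1
      = tblm b00 b01 b10 b11 0 1 + tblm b00 b01 b10 b11 1 0 := by decide

lemma tbl_in : ∀ b00 b01 b10 b11 (i j : Fin 2),
    bsel b00 b01 b10 b11 i j = true →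
    (∀ wb, tbld b00 b01 b10 b11 ≠ some ((i,j), wb)) →
    tblm b00 b01 b10 b11 i j = 1 := by decide

lemma tbl_out : ∀ b00 b01 b10 b11 (i j : Fin 2),
    bsel b00 b01 b10 b11 i j = false →
    (∀ wb, tbld b00 b01 b10 b11 ≠ some ((i,j), wb)) →
    tblm b00 b01 b10 b11 i j = 2 ∨ tblm b00 b01 b10 b11 i j = -1 := by decide

lemma tbl_defer : ∀ b00 b01 b10 b11 (i j : Fin 2) (wb : Bool),
    tbld b00 b01 b10 b11 = some ((i,j), wb) →
    tblm b00 b01 b10 b11 i j = 0 ∧ wb = bsel b00 b01 b10 b11 i j := by decide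

def cb (S : Finset (Fin 2 × Fin 2)) (i j : Fin 2) : Bool := decide ((i,j) ∈ S)

def mZ (S : Finset (Fin 2 × Fin 2)) (i j : Fin 2) : ℤ :=
  tblm (cb S 0 0) (cb S 0 1) (cb S 1 0) (cb S 1 1) i j

def dS (S : Finset (Fin 2 × Fin 2)) : Option ((Fin 2 × Fin 2) × Bool) :=
  tbld (cb S 0 0) (cb S 0 1) (cb S 1 0) (cb S 1 1)

lemma cb_bsel (S : Finset (Fin 2 × Fin 2)) (i j : Fin 2) :
    bsel (cb S 0 0) (cb S 0 1) (cb S 1 0) (cb S 1 1) i j = cb S i j := by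
  fin_cases i <;> fin_cases j <;> simp [bsel]

lemma mZ_D (S : Finset (Fin 2 × Fin 2)) :
    mZ S 0 0 + mZ S 1 1 = mZ S 0 1 + mZ S 1 0 := tbl_D _ _ _ _

lemma mZ_in (S : Finset (Fin 2 × Fin 2)) (i j : Fin 2) (h : (i,j) ∈ S)
    (h2 : ∀ wb, dS S ≠ some ((i,j),wb)) : mZ S i j = 1 :=
  tbl_in _ _ _ _ i j (by rw [cb_bsel]; simpa [cb] using h) h2

lemma mZ_out (S : Finset (Fin 2 × Fin 2)) (i j : Fin 2) (h : (i,j) ∉ S)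
    (h2 : ∀ wb, dS S ≠ some ((i,j),wb)) : mZ S i j = 2 ∨ mZ S i j = -1 :=
  tbl_out _ _ _ _ i j (by rw [cb_bsel]; simpa [cb] using h) h2

lemma mZ_defer (S : Finset (Fin 2 × Fin 2)) (i j : Fin 2) (wb : Bool)
    (h : dS S = some ((i,j),wb)) : mZ S i j = 0 ∧ wb = cb S i j := by
  have := tbl_defer _ _ _ _ i j wb h
  rwa [cb_bsel] at this

end Aux

set_option maxHeartbeats 1600000 in
theorem qgs_vc2_ge (p n : ℕ) (hp : p.Prime) (hp2 : 2 < p) [NeZero p]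
    (hn : 13 ≤ n)
    (M : Fin n → Matrix (Fin n) (Fin n) (ZMod p))
    (hsymm : ∀ i, (M i).IsSymm)
    (hrank : ∀ lam : Fin n → ZMod p, lam ≠ 0 → (∑ i, lam i • M i).rank = n) :
    VC2ge (QGS p n M) 2 := by
  haveI : Fact p.Prime := ⟨hp⟩
  classical
  set i0 : Fin n := ⟨0, by omega⟩ with hi0
  set i1 : Fin n := ⟨1, by omega⟩ with hi1
  have hi01 : i0 ≠ i1 := by simp [hi0, hi1, Fin.ext_iff]
  -- field facts
  have h2 : (2 : ZMod p) ≠ 0 := by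
    have : ((2 : ℕ) : ZMod p) ≠ 0 := by
      rw [Ne, ZMod.natCast_eq_zero_iff]
      intro hdv
      have := Nat.le_of_dvd (by norm_num) hdv
      omega
    simpa using this
  have h10 : (1 : ZMod p) ≠ 0 := one_ne_zero
  have h2i : (2 : ZMod p) * 2⁻¹ = 1 := mul_inv_cancel₀ h2
  -- symmetry facts
  have hds : ∀ (k : Fin n) (x y : Fin n → ZMod p),
      x ⬝ᵥ (M k).mulVec y = ((M k).mulVec x) ⬝ᵥ y := by
    intro k x y
    rw [Matrix.dotProduct_mulVec, ← Matrix.mulVec_transpose, hsymm k]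
  have hbs : ∀ (k : Fin n) (x y : Fin n → ZMod p),
      x ⬝ᵥ (M k).mulVec y = y ⬝ᵥ (M k).mulVec x := by
    intro k x y
    rw [hds, dotProduct_comm]
  -- rank facts
  have hM0 : (M i0).rank = n := by
    have h1 : (Pi.single i0 (1 : ZMod p) : Fin n → ZMod p) ≠ 0 := by
      intro h
      have := congrFun h i0
      simp at this
    have := hrank (Pi.single i0 1) h1
    rwa [Finset.sum_eq_single i0 (fun b _ hb => by rw [Pi.single_eq_of_ne hb]; simp)
      (fun h => absurd (Finset.mem_univ i0) h), Pi.single_eq_same, one_smul] at this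
  have hsurj : ∀ yv : Fin n → ZMod p, ∃ xv, (M i0).mulVec xv = yv := mulVec_surj _ hM0
  have hpencil : ∀ α β : ZMod p, ¬(α = 0 ∧ β = 0) →
      ∀ xv : Fin n → ZMod p, (α • M i0 + β • M i1).mulVec xv = 0 → xv = 0 := by
    intro α β hab xv hxv
    have hlam : ((Pi.single i0 α : Fin n → ZMod p) + (Pi.single i1 β : Fin n → ZMod p)) ≠ 0 := by
      intro h
      apply hab
      constructor
      · have := congrFun h i0
        simpa [Pi.single_apply, hi01, hi01.symm] using this
      · have := congrFun h i1
        simpa [Pi.single_apply, hi01, hi01.symm] using this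
    have hsum : ∑ i, ((Pi.single i0 α : Fin n → ZMod p) + (Pi.single i1 β : Fin n → ZMod p)) i • M i
        = α • M i0 + β • M i1 := by
      have e1 : ∀ (c : ZMod p) (t : Fin n),
          ∑ i, (Pi.single t c : Fin n → ZMod p) i • M i = c • M t := by
        intro c t
        rw [Finset.sum_eq_single t (fun b _ hb => by rw [Pi.single_eq_of_ne hb]; simp)
          (fun h => absurd (Finset.mem_univ t) h), Pi.single_eq_same]
      simp only [Pi.add_apply, add_smul, Finset.sum_add_distrib, e1]
    have := hrank _ hlam
    rw [hsum] at this
    exact mulVec_inj _ this hxv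
  -- choose v
  obtain ⟨v, hv0, hvQ0, hvQ1, -⟩ := cw_aux hn (M i0) (M i1) (fun _ => (0 : Fin n → ZMod p))
  -- choose Tv
  obtain ⟨Tv, hTv⟩ := hsurj ((M i1).mulVec v)
  -- key: B1 x v = B0 x Tv
  have hB1B0 : ∀ x : Fin n → ZMod p, x ⬝ᵥ (M i1).mulVec v = x ⬝ᵥ (M i0).mulVec Tv := by
    intro x; rw [hTv]
  -- linear independence of v, Tv
  have hli2 : LinearIndependent (ZMod p) ![v, Tv] := by
    rw [Fintype.linearIndependent_iff]
    intro c hc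
    have hc' : c 0 • v + c 1 • Tv = 0 := by
      simpa [Fin.sum_univ_two] using hc
    have hM : (c 0 • M i0 + c 1 • M i1).mulVec v = 0 := by
      rw [Matrix.add_mulVec, Matrix.smul_mulVec, Matrix.smul_mulVec, ← hTv,
        ← Matrix.mulVec_smul, ← Matrix.mulVec_smul, ← Matrix.mulVec_add, hc',
        Matrix.mulVec_zero]
    intro i
    by_contra hci
    refine hv0 (hpencil (c 0) (c 1) (fun hcc => ?_) v hM)
    fin_cases i
    · exact hci hcc.1
    · exact hci hcc.2
  obtain ⟨γ2, hγ2⟩ := dual_family ![v, Tv] hli2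
  -- choose u
  obtain ⟨u, hu0, huQ0, huQ1, hul⟩ := cw_aux hn (M i0) (M i1)
    ![(M i0).mulVec v, (M i1).mulVec v, γ2 0, γ2 1, 0, 0, 0, 0]
  have hγ2u : ∀ k : Fin 2, γ2 k ⬝ᵥ u = 0 := by
    intro k
    fin_cases k
    · simpa using hul 2
    · simpa using hul 3
  have g2v0 : γ2 0 ⬝ᵥ v = 1 := by simpa using hγ2 0 0
  have g2T0 : γ2 0 ⬝ᵥ Tv = 0 := by simpa using hγ2 0 1
  have g2v1 : γ2 1 ⬝ᵥ v = 0 := by simpa using hγ2 1 0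
  have g2T1 : γ2 1 ⬝ᵥ Tv = 1 := by simpa using hγ2 1 1
  have hli3 : LinearIndependent (ZMod p) ![u, v, Tv] := by
    rw [Fintype.linearIndependent_iff]
    intro c hc
    have hsum : c 0 • u + c 1 • v + c 2 • Tv = 0 := by
      simpa [Fin.sum_univ_three] using hc
    have h1 : c 1 = 0 := by
      have := congrArg (fun w => γ2 0 ⬝ᵥ w) hsum
      simpa [dotProduct_add, dotProduct_smul, hγ2u 0, g2v0, g2T0] using this
    have h2 : c 2 = 0 := by
      have := congrArg (fun w => γ2 1 ⬝ᵥ w) hsum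
      simpa [dotProduct_add, dotProduct_smul, hγ2u 1, g2v1, g2T1] using this
    have h0 : c 0 = 0 := by
      rw [h1, h2] at hsum
      simp only [zero_smul, add_zero] at hsum
      rcases smul_eq_zero.mp hsum with h | h
      · exact h
      · exact absurd h hu0
    intro i
    fin_cases i
    · exact h0
    · exact h1
    · exact h2
  obtain ⟨γ3, hγ3⟩ := dual_family ![u, v, Tv] hli3
  -- choose a
  obtain ⟨a, ha0, haQ0, haQ1, hal⟩ := cw_aux hn (M i0) (M i1)
    ![(M i0).mulVec u, (M i0).mulVec v, (M i1).mulVec v, γ3 0, γ3 1, γ3 2, 0, 0]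
  have hγ3a : ∀ k : Fin 3, γ3 k ⬝ᵥ a = 0 := by
    intro k
    fin_cases k
    · simpa using hal 3
    · simpa using hal 4
    · simpa using hal 5
  have g3u0 : γ3 0 ⬝ᵥ u = 1 := by simpa using hγ3 0 0
  have g3v0 : γ3 0 ⬝ᵥ v = 0 := by simpa using hγ3 0 1
  have g3T0 : γ3 0 ⬝ᵥ Tv = 0 := by simpa using hγ3 0 2
  have g3u1 : γ3 1 ⬝ᵥ u = 0 := by simpa using hγ3 1 0
  have g3v1 : γ3 1 ⬝ᵥ v = 1 := by simpa using hγ3 1 1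
  have g3T1 : γ3 1 ⬝ᵥ Tv = 0 := by simpa using hγ3 1 2
  have g3u2 : γ3 2 ⬝ᵥ u = 0 := by simpa using hγ3 2 0
  have g3v2 : γ3 2 ⬝ᵥ v = 0 := by simpa using hγ3 2 1
  have g3T2 : γ3 2 ⬝ᵥ Tv = 1 := by simpa using hγ3 2 2
  have hli4 : LinearIndependent (ZMod p) ![a, u, v, Tv] := by
    rw [Fintype.linearIndependent_iff]
    intro c hc
    have hsum : c 0 • a + c 1 • u + c 2 • v + c 3 • Tv = 0 := by
      simpa [Fin.sum_univ_four] using hc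
    have h1 : c 1 = 0 := by
      have := congrArg (fun w => γ3 0 ⬝ᵥ w) hsum
      simpa [dotProduct_add, dotProduct_smul, hγ3a 0, g3u0, g3v0, g3T0] using this
    have h2 : c 2 = 0 := by
      have := congrArg (fun w => γ3 1 ⬝ᵥ w) hsum
      simpa [dotProduct_add, dotProduct_smul, hγ3a 1, g3u1, g3v1, g3T1] using this
    have h3 : c 3 = 0 := by
      have := congrArg (fun w => γ3 2 ⬝ᵥ w) hsum
      simpa [dotProduct_add, dotProduct_smul, hγ3a 2, g3u2, g3v2, g3T2] using this
    have h0 : c 0 = 0 := by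
      rw [h1, h2, h3] at hsum
      simp only [zero_smul, add_zero] at hsum
      rcases smul_eq_zero.mp hsum with h | h
      · exact h
      · exact absurd h ha0
    intro i
    fin_cases i
    · exact h0
    · exact h1
    · exact h2
    · exact h3
  obtain ⟨γ4, hγ4⟩ := dual_family ![a, u, v, Tv] hli4
  -- choose b
  obtain ⟨b, hb0, hbQ0, hbQ1, hbl⟩ := cw_aux hn (M i0) (M i1)
    ![(M i0).mulVec u, (M i0).mulVec v, (M i1).mulVec v, (M i0).mulVec a, γ4 0, γ4 1, γ4 2, γ4 3]
  have hγ4b : ∀ k : Fin 4, γ4 k ⬝ᵥ b = 0 := by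
    intro k
    fin_cases k
    · simpa using hbl 4
    · simpa using hbl 5
    · simpa using hbl 6
    · simpa using hbl 7
  have g4 : ∀ k l : Fin 4, γ4 k ⬝ᵥ (![a, u, v, Tv] l) = if k = l then 1 else 0 := hγ4
  have hli5 : LinearIndependent (ZMod p) ![a, b, u, v, Tv] := by
    rw [Fintype.linearIndependent_iff]
    intro c hc
    have hsum : c 0 • a + c 1 • b + c 2 • u + c 3 • v + c 4 • Tv = 0 := by
      simpa [Fin.sum_univ_five] using hc
    have key : ∀ k : Fin 4, γ4 k ⬝ᵥ (c 0 • a + c 1 • b + c 2 • u + c 3 • v + c 4 • Tv)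
        = c 0 * (γ4 k ⬝ᵥ a) + c 2 * (γ4 k ⬝ᵥ u) + c 3 * (γ4 k ⬝ᵥ v) + c 4 * (γ4 k ⬝ᵥ Tv) := by
      intro k
      simp [dotProduct_add, dotProduct_smul, hγ4b k]
      try ring
    have h0 : c 0 = 0 := by
      have := congrArg (fun w => γ4 0 ⬝ᵥ w) hsum
      simp only [key 0, dotProduct_zero] at this
      have e0 := g4 0 0; have e1 := g4 0 1; have e2 := g4 0 2; have e3 := g4 0 3
      simp at e0 e1 e2 e3
      rw [e0, e1, e2, e3] at this
      simpa using this
    have h2 : c 2 = 0 := by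
      have := congrArg (fun w => γ4 1 ⬝ᵥ w) hsum
      simp only [key 1, dotProduct_zero] at this
      have e0 := g4 1 0; have e1 := g4 1 1; have e2 := g4 1 2; have e3 := g4 1 3
      simp at e0 e1 e2 e3
      rw [e0, e1, e2, e3] at this
      simpa using this
    have h3 : c 3 = 0 := by
      have := congrArg (fun w => γ4 2 ⬝ᵥ w) hsum
      simp only [key 2, dotProduct_zero] at this
      have e0 := g4 2 0; have e1 := g4 2 1; have e2 := g4 2 2; have e3 := g4 2 3
      simp at e0 e1 e2 e3
      rw [e0, e1, e2, e3] at this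
      simpa using this
    have h4 : c 4 = 0 := by
      have := congrArg (fun w => γ4 3 ⬝ᵥ w) hsum
      simp only [key 3, dotProduct_zero] at this
      have e0 := g4 3 0; have e1 := g4 3 1; have e2 := g4 3 2; have e3 := g4 3 3
      simp at e0 e1 e2 e3
      rw [e0, e1, e2, e3] at this
      simpa using this
    have h1 : c 1 = 0 := by
      rw [h0, h2, h3, h4] at hsum
      simp only [zero_smul, add_zero, zero_add] at hsum
      rcases smul_eq_zero.mp hsum with h | h
      · exact h
      · exact absurd h hb0
    intro i
    fin_cases i
    · exact h0
    · exact h1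
    · exact h2
    · exact h3
    · exact h4
  obtain ⟨ξ, hξ⟩ := dual_family ![a, b, u, v, Tv] hli5
  -- the linear-system solver
  choose zsol hzsol using (fun r : Fin 5 → ZMod p => hsurj (∑ k, r k • ξ k))
  have hzw : ∀ (r : Fin 5 → ZMod p) (j : Fin 5),
      (![a, b, u, v, Tv] j) ⬝ᵥ (M i0).mulVec (zsol r) = r j := by
    intro r j
    rw [hzsol, dotProduct_comm]
    have hsd : (∑ k, r k • ξ k) ⬝ᵥ (![a, b, u, v, Tv] j)
        = ∑ k, (r k • ξ k) ⬝ᵥ (![a, b, u, v, Tv] j) := by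
      simp only [dotProduct, Finset.sum_apply, Pi.smul_apply, smul_eq_mul,
        Finset.sum_mul]
      rw [Finset.sum_comm]
    rw [hsd]
    simp only [smul_dotProduct, hξ, smul_eq_mul, mul_ite, mul_one, mul_zero]
    simp
  -- named atoms, M i0
  have A_vu : v ⬝ᵥ (M i0).mulVec u = 0 := by rw [hds]; simpa using hul 0
  have A_uv : u ⬝ᵥ (M i0).mulVec v = 0 := by rw [hbs]; exact A_vu
  have A_ua : u ⬝ᵥ (M i0).mulVec a = 0 := by rw [hds]; simpa using hal 0
  have A_au : a ⬝ᵥ (M i0).mulVec u = 0 := by rw [hbs]; exact A_ua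
  have A_va : v ⬝ᵥ (M i0).mulVec a = 0 := by rw [hds]; simpa using hal 1
  have A_av : a ⬝ᵥ (M i0).mulVec v = 0 := by rw [hbs]; exact A_va
  have A_ub : u ⬝ᵥ (M i0).mulVec b = 0 := by rw [hds]; simpa using hbl 0
  have A_bu : b ⬝ᵥ (M i0).mulVec u = 0 := by rw [hbs]; exact A_ub
  have A_vb : v ⬝ᵥ (M i0).mulVec b = 0 := by rw [hds]; simpa using hbl 1
  have A_bv : b ⬝ᵥ (M i0).mulVec v = 0 := by rw [hbs]; exact A_vb
  have A_ab : a ⬝ᵥ (M i0).mulVec b = 0 := by rw [hds]; simpa using hbl 3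
  have A_ba : b ⬝ᵥ (M i0).mulVec a = 0 := by rw [hbs]; exact A_ab
  -- named atoms, M i1
  have C_vu : v ⬝ᵥ (M i1).mulVec u = 0 := by rw [hds]; simpa using hul 1
  have C_uv : u ⬝ᵥ (M i1).mulVec v = 0 := by rw [hbs]; exact C_vu
  have C_va : v ⬝ᵥ (M i1).mulVec a = 0 := by rw [hds]; simpa using hal 2
  have C_av : a ⬝ᵥ (M i1).mulVec v = 0 := by rw [hbs]; exact C_va
  have C_vb : v ⬝ᵥ (M i1).mulVec b = 0 := by rw [hds]; simpa using hbl 2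
  have C_bv : b ⬝ᵥ (M i1).mulVec v = 0 := by rw [hbs]; exact C_vb
  -- z-dependent atoms
  have Z_a : ∀ r, a ⬝ᵥ (M i0).mulVec (zsol r) = r 0 := fun r => by simpa using hzw r 0
  have Z_b : ∀ r, b ⬝ᵥ (M i0).mulVec (zsol r) = r 1 := fun r => by simpa using hzw r 1
  have Z_u : ∀ r, u ⬝ᵥ (M i0).mulVec (zsol r) = r 2 := fun r => by simpa using hzw r 2
  have Z_v : ∀ r, v ⬝ᵥ (M i0).mulVec (zsol r) = r 3 := fun r => by simpa using hzw r 3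
  have Z_T : ∀ r, Tv ⬝ᵥ (M i0).mulVec (zsol r) = r 4 := fun r => by simpa using hzw r 4
  have Zs_a : ∀ r, (zsol r) ⬝ᵥ (M i0).mulVec a = r 0 := fun r => by rw [hbs]; exact Z_a r
  have Zs_b : ∀ r, (zsol r) ⬝ᵥ (M i0).mulVec b = r 1 := fun r => by rw [hbs]; exact Z_b r
  have Zs_u : ∀ r, (zsol r) ⬝ᵥ (M i0).mulVec u = r 2 := fun r => by rw [hbs]; exact Z_u r
  have Zs_v : ∀ r, (zsol r) ⬝ᵥ (M i0).mulVec v = r 3 := fun r => by rw [hbs]; exact Z_v r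
  have Z1_v : ∀ r, v ⬝ᵥ (M i1).mulVec (zsol r) = r 4 := by
    intro r
    rw [hbs, hB1B0, hbs]
    exact Z_T r
  have Z1s_v : ∀ r, (zsol r) ⬝ᵥ (M i1).mulVec v = r 4 := fun r => by rw [hbs]; exact Z1_v r
  -- the construction
  set rr : Finset (Fin 2 × Fin 2) → Fin 5 → ZMod p := fun S =>
    ![2⁻¹ * (((mZ S 1 0 : ℤ) : ZMod p) - ((mZ S 0 0 : ℤ) : ZMod p)),
      2⁻¹ * (((mZ S 0 1 : ℤ) : ZMod p) - ((mZ S 0 0 : ℤ) : ZMod p)), 1, 0, 1] with hrr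
  set xx : Fin 2 → (Fin n → ZMod p) := ![0, a] with hxx
  set yy : Fin 2 → (Fin n → ZMod p) := ![0, b] with hyy
  set ss : Finset (Fin 2 × Fin 2) → ZMod p := fun S =>
    2⁻¹ * (((mZ S 0 0 : ℤ) : ZMod p) - (zsol (rr S)) ⬝ᵥ (M i0).mulVec (zsol (rr S))) with hss
  set PP : Finset (Fin 2 × Fin 2) → (Fin 2 × Fin 2) → (Fin n → ZMod p) := fun S c =>
    xx c.1 + yy c.2 + (zsol (rr S) + ss S • u) with hPP
  set tt : Finset (Fin 2 × Fin 2) → ZMod p := fun S =>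
    match dS S with
    | none => (0 : ZMod p)
    | some (c, wb) =>
        2⁻¹ * ((if wb then 1 else 2) - (PP S c) ⬝ᵥ (M i1).mulVec (PP S c)) with htt
  set zz : Finset (Fin 2 × Fin 2) → (Fin n → ZMod p) := fun S =>
    zsol (rr S) + ss S • u + tt S • v with hzz
  have hrr0 : ∀ S, rr S 0 = 2⁻¹ * (((mZ S 1 0 : ℤ) : ZMod p) - ((mZ S 0 0 : ℤ) : ZMod p)) :=
    fun S => rfl
  have hrr1 : ∀ S, rr S 1 = 2⁻¹ * (((mZ S 0 1 : ℤ) : ZMod p) - ((mZ S 0 0 : ℤ) : ZMod p)) :=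
    fun S => rfl
  have hrr2 : ∀ S, rr S 2 = 1 := fun S => rfl
  have hrr3 : ∀ S, rr S 3 = 0 := fun S => rfl
  have hrr4 : ∀ S, rr S 4 = 1 := fun S => rfl
  have KEY00 : ∀ (S : Finset (Fin 2 × Fin 2)),
      ((xx 0 + yy 0 + zz S) ⬝ᵥ (M i0).mulVec (xx 0 + yy 0 + zz S)) = ((mZ S 0 0 : ℤ) : ZMod p) := by
    intro S
    have e1 : xx 0 + yy 0 + zz S = zz S := by
      rw [hxx, hyy]; simp
    rw [e1, hzz]
    simp only [Matrix.mulVec_add, Matrix.mulVec_smul, dotProduct_add,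
      add_dotProduct, dotProduct_smul, smul_dotProduct, smul_eq_mul,
      huQ0, hvQ0, A_vu, A_uv, Z_u, Z_v, Zs_u, Zs_v, hrr2, hrr3,
      mul_zero, zero_mul, add_zero, zero_add, mul_one]
    simp only [hss]
    linear_combination (((mZ S 0 0 : ℤ) : ZMod p)
      - zsol (rr S) ⬝ᵥ (M i0).mulVec (zsol (rr S))) * h2i
  have KEY10 : ∀ (S : Finset (Fin 2 × Fin 2)),
      ((xx 1 + yy 0 + zz S) ⬝ᵥ (M i0).mulVec (xx 1 + yy 0 + zz S)) = ((mZ S 1 0 : ℤ) : ZMod p) := by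
    intro S
    have e1 : xx 1 + yy 0 + zz S = a + zz S := by
      rw [hxx, hyy]; simp
    rw [e1, hzz]
    simp only [Matrix.mulVec_add, Matrix.mulVec_smul, dotProduct_add,
      add_dotProduct, dotProduct_smul, smul_dotProduct, smul_eq_mul,
      huQ0, hvQ0, haQ0, A_vu, A_uv, A_ua, A_au, A_va, A_av, Z_a, Z_u, Z_v, Zs_a, Zs_u, Zs_v,
      hrr0, hrr2, hrr3, mul_zero, zero_mul, add_zero, zero_add, mul_one]
    simp only [hss]
    linear_combination (((mZ S 1 0 : ℤ) : ZMod p)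
      - zsol (rr S) ⬝ᵥ (M i0).mulVec (zsol (rr S))) * h2i
  have KEY01 : ∀ (S : Finset (Fin 2 × Fin 2)),
      ((xx 0 + yy 1 + zz S) ⬝ᵥ (M i0).mulVec (xx 0 + yy 1 + zz S)) = ((mZ S 0 1 : ℤ) : ZMod p) := by
    intro S
    have e1 : xx 0 + yy 1 + zz S = b + zz S := by
      rw [hxx, hyy]; simp
    rw [e1, hzz]
    simp only [Matrix.mulVec_add, Matrix.mulVec_smul, dotProduct_add,
      add_dotProduct, dotProduct_smul, smul_dotProduct, smul_eq_mul,
      huQ0, hvQ0, hbQ0, A_vu, A_uv, A_ub, A_bu, A_vb, A_bv, Z_b, Z_u, Z_v, Zs_b, Zs_u, Zs_v,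
      hrr1, hrr2, hrr3, mul_zero, zero_mul, add_zero, zero_add, mul_one]
    simp only [hss]
    linear_combination (((mZ S 0 1 : ℤ) : ZMod p)
      - zsol (rr S) ⬝ᵥ (M i0).mulVec (zsol (rr S))) * h2i
  have KEY11 : ∀ (S : Finset (Fin 2 × Fin 2)),
      ((xx 1 + yy 1 + zz S) ⬝ᵥ (M i0).mulVec (xx 1 + yy 1 + zz S)) = ((mZ S 1 1 : ℤ) : ZMod p) := by
    intro S
    have hDc : ((mZ S 0 0 : ℤ) : ZMod p) + ((mZ S 1 1 : ℤ) : ZMod p)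
        = ((mZ S 0 1 : ℤ) : ZMod p) + ((mZ S 1 0 : ℤ) : ZMod p) := by
      exact_mod_cast congrArg (fun t : ℤ => (t : ZMod p)) (mZ_D S)
    have e1 : xx 1 + yy 1 + zz S = a + b + zz S := by
      rw [hxx, hyy]; simp
    rw [e1, hzz]
    simp only [Matrix.mulVec_add, Matrix.mulVec_smul, dotProduct_add,
      add_dotProduct, dotProduct_smul, smul_dotProduct, smul_eq_mul,
      huQ0, hvQ0, haQ0, hbQ0, A_vu, A_uv, A_ua, A_au, A_va, A_av, A_ub, A_bu, A_vb, A_bv,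
      A_ab, A_ba, Z_a, Z_b, Z_u, Z_v, Zs_a, Zs_b, Zs_u, Zs_v,
      hrr0, hrr1, hrr2, hrr3, mul_zero, zero_mul, add_zero, zero_add, mul_one]
    simp only [hss]
    linear_combination - hDc + (((mZ S 1 0 : ℤ) : ZMod p) + ((mZ S 0 1 : ℤ) : ZMod p)
      - ((mZ S 0 0 : ℤ) : ZMod p)
      - zsol (rr S) ⬝ᵥ (M i0).mulVec (zsol (rr S))) * h2i
  have KEY1 : ∀ (S : Finset (Fin 2 × Fin 2)) (i j : Fin 2),
      ((xx i + yy j + zz S) ⬝ᵥ (M i0).mulVec (xx i + yy j + zz S)) = ((mZ S i j : ℤ) : ZMod p) := by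
    intro S i j
    fin_cases i <;> fin_cases j
    · exact KEY00 S
    · exact KEY01 S
    · exact KEY10 S
    · exact KEY11 S
  -- Q1 value at the deferred cell
  have KEY2 : ∀ (S : Finset (Fin 2 × Fin 2)) (c : Fin 2 × Fin 2) (wb : Bool),
      dS S = some (c, wb) →
      ((xx c.1 + yy c.2 + zz S) ⬝ᵥ (M i1).mulVec (xx c.1 + yy c.2 + zz S))
        = (if wb then 1 else 2) := by
    intro S c wb hd
    have e1 : xx c.1 + yy c.2 + zz S = PP S c + tt S • v := by
      simp only [hPP, hzz]; abel
    have htts : tt S = 2⁻¹ * ((if wb then 1 else 2) - (PP S c) ⬝ᵥ (M i1).mulVec (PP S c)) := by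
      simp only [htt, hd]
    have hPv : (PP S c) ⬝ᵥ (M i1).mulVec v = 1 := by
      simp only [hPP]
      obtain ⟨c1, c2⟩ := c
      fin_cases c1 <;> fin_cases c2 <;>
        · simp only [hxx, hyy, Matrix.cons_val_zero, Matrix.cons_val_one, Matrix.head_cons]
          simp only [Matrix.mulVec_add, Matrix.mulVec_smul, dotProduct_add,
            add_dotProduct, dotProduct_smul, smul_dotProduct, smul_eq_mul,
            C_av, C_bv, C_uv, Z1s_v, hrr4, zero_dotProduct, mul_zero, add_zero, zero_add,
            mul_one]
          simp [C_av, C_bv]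
    have hvP : v ⬝ᵥ (M i1).mulVec (PP S c) = 1 := by rw [hbs]; exact hPv
    rw [e1]
    simp only [Matrix.mulVec_add, Matrix.mulVec_smul, dotProduct_add,
      add_dotProduct, dotProduct_smul, smul_dotProduct, smul_eq_mul,
      hPv, hvP, hvQ1, mul_zero, mul_one, add_zero]
    rw [htts]
    linear_combination ((if wb then (1 : ZMod p) else 2)
      - (PP S c) ⬝ᵥ (M i1).mulVec (PP S c)) * h2i
  -- membership criteria
  have mem1 : ∀ w : Fin n → ZMod p, w ⬝ᵥ (M i0).mulVec w = 1 → w ∈ QGS p n M := by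
    intro w h
    refine ⟨i0, fun j hj => ?_, h⟩
    exact absurd (Fin.lt_def.mp hj : (j : ℕ) < 0) (Nat.not_lt_zero _)
  have mem2 : ∀ w : Fin n → ZMod p, w ⬝ᵥ (M i0).mulVec w = 0 →
      w ⬝ᵥ (M i1).mulVec w = 1 → w ∈ QGS p n M := by
    intro w h0 h1
    refine ⟨i1, fun j hj => ?_, h1⟩
    have hv : (j : ℕ) < 1 := Fin.lt_def.mp hj
    have hj0 : j = i0 := Fin.ext (show (j : ℕ) = ((i0 : Fin n) : ℕ) from Nat.lt_one_iff.mp hv)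
    rw [hj0]
    exact h0
  have mem3 : ∀ (w : Fin n → ZMod p) (c0 : ZMod p), w ⬝ᵥ (M i0).mulVec w = c0 →
      c0 ≠ 0 → c0 ≠ 1 → w ∉ QGS p n M := by
    rintro w c0 hQ hne0 hne1 ⟨iw, hall, hone⟩
    by_cases hiw : iw = i0
    · rw [hiw] at hone
      exact hne1 (hQ.symm.trans hone)
    · have hv : (iw : ℕ) ≠ 0 := fun hz =>
        hiw (Fin.ext (show (iw : ℕ) = ((i0 : Fin n) : ℕ) from hz))
      have hlt : i0 < iw :=
        Fin.lt_def.mpr (show ((i0 : Fin n) : ℕ) < (iw : ℕ) from Nat.pos_of_ne_zero hv)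
      exact hne0 (hQ.symm.trans (hall i0 hlt))
  have mem4 : ∀ (w : Fin n → ZMod p) (c1 : ZMod p), w ⬝ᵥ (M i0).mulVec w = 0 →
      w ⬝ᵥ (M i1).mulVec w = c1 → c1 ≠ 0 → c1 ≠ 1 → w ∉ QGS p n M := by
    rintro w c1 hQ0 hQ1 hne0 hne1 ⟨iw, hall, hone⟩
    by_cases hiw0 : iw = i0
    · rw [hiw0] at hone
      exact h10 ((hQ0.symm.trans hone).symm)
    · by_cases hiw1 : iw = i1
      · rw [hiw1] at hone
        exact hne1 (hQ1.symm.trans hone)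
      · have hv0 : (iw : ℕ) ≠ 0 := fun hz =>
          hiw0 (Fin.ext (show (iw : ℕ) = ((i0 : Fin n) : ℕ) from hz))
        have hv1 : (iw : ℕ) ≠ 1 := fun hz =>
          hiw1 (Fin.ext (show (iw : ℕ) = ((i1 : Fin n) : ℕ) from hz))
        have h1lt : 1 < (iw : ℕ) := by omega
        have hlt : i1 < iw :=
          Fin.lt_def.mpr (show ((i1 : Fin n) : ℕ) < (iw : ℕ) from h1lt)
        exact hne0 (hQ1.symm.trans (hall i1 hlt))
  -- numeric facts
  have h21 : (2 : ZMod p) ≠ 1 := by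
    intro h
    apply h10
    calc (1 : ZMod p) = 2 - 1 := by ring
      _ = 1 - 1 := by rw [h]
      _ = 0 := by ring
  have hm0 : (-1 : ZMod p) ≠ 0 := neg_ne_zero.mpr h10
  have hm1 : (-1 : ZMod p) ≠ 1 := by
    intro h
    apply h2
    calc (2 : ZMod p) = 1 - (-1) := by ring
      _ = 1 - 1 := by rw [h]
      _ = 0 := by ring
  -- final assembly
  refine ⟨xx, yy, zz, ?_⟩
  intro S i j
  by_cases hmem : (i, j) ∈ S
  · simp only [hmem, iff_true]
    rcases hd : dS S with - | ⟨c, wb⟩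
    · refine mem1 _ ?_
      rw [KEY1 S i j, mZ_in S i j hmem (fun wb' h => by rw [hd] at h; cases h)]
      norm_num
    · by_cases hc : c = (i, j)
      · subst hc
        obtain ⟨hm00, hwb⟩ := mZ_defer S i j wb hd
        have hwb' : wb = true := by rw [hwb]; simp [cb, hmem]
        refine mem2 _ ?_ ?_
        · rw [KEY1 S i j, hm00]; norm_num
        · have := KEY2 S (i, j) wb hd
          rw [hwb'] at this
          simpa using this
      · refine mem1 _ ?_
        rw [KEY1 S i j, mZ_in S i j hmem (fun wb' h => by
          rw [hd] at h
          exact hc (congrArg Prod.fst (Option.some.inj h)))]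
        norm_num
  · simp only [hmem, iff_false]
    have hout : ∀ (hnd : ∀ wb', dS S ≠ some ((i,j), wb')),
        (xx i + yy j + zz S) ∉ QGS p n M := by
      intro hnd
      rcases mZ_out S i j hmem hnd with hm | hm
      · refine mem3 _ ((mZ S i j : ℤ) : ZMod p) (KEY1 S i j) ?_ ?_
        · rw [hm]; push_cast; exact h2
        · rw [hm]; push_cast; exact h21
      · refine mem3 _ ((mZ S i j : ℤ) : ZMod p) (KEY1 S i j) ?_ ?_
        · rw [hm]; push_cast; exact hm0
        · rw [hm]; push_cast; exact hm1
    rcases hd : dS S with - | ⟨c, wb⟩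
    · exact hout (fun wb' h => by rw [hd] at h; cases h)
    · by_cases hc : c = (i, j)
      · subst hc
        obtain ⟨hm00, hwb⟩ := mZ_defer S i j wb hd
        have hwb' : wb = false := by rw [hwb]; simp [cb, hmem]
        refine mem4 _ (2 : ZMod p) ?_ ?_ h2 h21
        · rw [KEY1 S i j, hm00]; norm_num
        · have := KEY2 S (i, j) wb hd
          rw [hwb'] at this
          simpa using this
      · exact hout (fun wb' h => by
          rw [hd] at h
          exact hc (congrArg Prod.fst (Option.some.inj h)))
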